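/- There exists a linear map H : X → Y such that for every x ∈ X, H x ∈ Kᗮ and there exists z ∈ Z with Jx x + Jy (H x) + Jz z = 0; moreover H is the unique linear map with these two properties. (This is the linear map DH(x₀) of Theorem 2.4: the differential of the canonical solution map of a constant-rank elimination problem is the unique linear solution of the system (1.6).) -/

import Mathlib

/-- Theorem 2.4: there is a unique linear map `H : X → Y` (the differential of
the canonical solution map) with `H x ∈ Kᗮ` and
`Jx x + Jy (H x) + Jz z = 0` for some `z`, for every `x`. -/
theorem stmt5 {X Y Z W : Type*}
    [NormedAddCommGroup X] [InnerProductSpace ℝ X] [FiniteDimensional ℝ X]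
    [NormedAddCommGroup Y] [InnerProductSpace ℝ Y] [FiniteDimensional ℝ Y]
    [NormedAddCommGroup Z] [InnerProductSpace ℝ Z] [FiniteDimensional ℝ Z]
    [NormedAddCommGroup W] [InnerProductSpace ℝ W] [FiniteDimensional ℝ W]
    (Jx : X →ₗ[ℝ] W) (Jy : Y →ₗ[ℝ] W) (Jz : Z →ₗ[ℝ] W)
    (hfeas : LinearMap.range Jx ≤ LinearMap.range Jy ⊔ LinearMap.range Jz)
    (K : Submodule ℝ Y)
    (hK : K = (LinearMap.ker (Jy.coprod Jz)).map (LinearMap.fst ℝ Y Z)) :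
    ∃! H : X →ₗ[ℝ] Y, ∀ x : X,
      H x ∈ Kᗮ ∧ ∃ z : Z, Jx x + Jy (H x) + Jz z = 0 := by
  -- membership in K iff solvable
  have hKmem : ∀ y : Y, y ∈ K ↔ ∃ z : Z, Jy y + Jz z = 0 := by
    intro y
    rw [hK]
    constructor
    · rintro ⟨⟨y', z⟩, hmem, rfl⟩
      exact ⟨z, hmem⟩
    · rintro ⟨z, hz⟩
      exact ⟨(y, z), hz, rfl⟩
  set T : Y × Z →ₗ[ℝ] W := Jy.coprod Jz with hT
  have hrange : ∀ x : X, Jx x ∈ LinearMap.range T := by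
    intro x
    rw [hT, LinearMap.range_coprod]
    exact hfeas ⟨x, rfl⟩
  -- right inverse of the range restriction of T
  obtain ⟨σ, hσ⟩ := T.rangeRestrict.exists_rightInverse_of_surjective
    (LinearMap.range_eq_top.mpr T.surjective_rangeRestrict)
  set G : X →ₗ[ℝ] Y × Z := σ ∘ₗ Jx.codRestrict (LinearMap.range T) hrange with hG
  have hTG : ∀ x : X, T (G x) = Jx x := by
    intro x
    have := congrArg (fun f => (f (Jx.codRestrict (LinearMap.range T) hrange x) : W)) hσ
    simpa [hG] using this
  set P := (Submodule.orthogonalProjection Kᗮ : Y →L[ℝ] Kᗮ)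
  set H : X →ₗ[ℝ] Y :=
    -(Kᗮ.subtype ∘ₗ (P : Y →ₗ[ℝ] Kᗮ) ∘ₗ (LinearMap.fst ℝ Y Z) ∘ₗ G) with hH
  refine ⟨H, ?_, ?_⟩
  · intro x
    set y0 : Y := (G x).1 with hy0
    set z0 : Z := (G x).2 with hz0
    have hTG' : Jy y0 + Jz z0 = Jx x := hTG x
    have hHx : H x = -(P y0 : Y) := by simp [hH, hy0]
    constructor
    · rw [hHx]; exact neg_mem (P y0).2
    · -- y0 - P y0 ∈ Kᗮᗮ = K
      have hk : y0 - (P y0 : Y) ∈ K := by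
        have := Submodule.sub_starProjection_mem_orthogonal (K := Kᗮ) y0
        rwa [Submodule.orthogonal_orthogonal] at this
      obtain ⟨z', hz'⟩ := (hKmem _).mp hk
      refine ⟨z' - z0, ?_⟩
      have : Jy (y0 - (P y0 : Y)) + Jz z' = 0 := hz'
      rw [hHx, ← hTG', map_neg]
      simp only [map_sub] at this ⊢
      abel_nf at this ⊢
      exact this
  · intro H' hH'
    ext x
    have h1 := hH' x
    have h2 : (H x ∈ Kᗮ ∧ ∃ z : Z, Jx x + Jy (H x) + Jz z = 0) := by
      -- reuse: H satisfies it (proved above); re-derive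
      set y0 : Y := (G x).1 with hy0
      set z0 : Z := (G x).2 with hz0
      have hTG' : Jy y0 + Jz z0 = Jx x := hTG x
      have hHx : H x = -(P y0 : Y) := by simp [hH, hy0]
      constructor
      · rw [hHx]; exact neg_mem (P y0).2
      · have hk : y0 - (P y0 : Y) ∈ K := by
          have := Submodule.sub_starProjection_mem_orthogonal (K := Kᗮ) y0
          rwa [Submodule.orthogonal_orthogonal] at this
        obtain ⟨z', hz'⟩ := (hKmem _).mp hk
        refine ⟨z' - z0, ?_⟩
        have : Jy (y0 - (P y0 : Y)) + Jz z' = 0 := hz'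
        rw [hHx, ← hTG', map_neg]
        simp only [map_sub] at this ⊢
        abel_nf at this ⊢
        exact this
    obtain ⟨hmem1, z1, hz1⟩ := h1
    obtain ⟨hmem2, z2, hz2⟩ := h2
    have hdiff : H' x - H x ∈ K := by
      refine (hKmem _).mpr ⟨z1 - z2, ?_⟩
      have h := congrArg₂ (· - ·) hz1 hz2
      simp only [map_sub, sub_zero] at h ⊢
      abel_nf at h ⊢
      exact h
    have hdiff' : H' x - H x ∈ Kᗮ := sub_mem hmem1 hmem2
    have : H' x - H x = 0 := by
      have := Submodule.inner_right_of_mem_orthogonal hdiff hdiff'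
      exact inner_self_eq_zero.mp this
    exact sub_eq_zero.mp this
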